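/- Let n ≥ 2 and let M ⊆ F_n be a macro set containing at most c·ℓ^p macros of each G-length ℓ ≥ 2, for constants c > 0 and p ≥ 0. Then for any integer d ≥ 3 satisfying n^d > 4e(n + c)d^{p+1}, one has f_{G'}(s) < d·s for all integers s ≥ 1. In particular, a polynomial-density macro set yields only linear expansion: f_{G'}(s) = O(s). -/

import Mathlib

open scoped ENNReal

/-- The single-letter generating set `G` of the free monoid `F_n` on `n` letters,
realized as lists over `Fin n`. -/
def letters (n : ℕ) : Set (List (Fin n)) := {w | ∃ i : Fin n, w = [i]}

/-- The length of `w ∈ F_n` with respect to a generating set `S`: the minimum number `k`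
such that `w` is a concatenation of `k` elements of `S`; `⊤` if `w` is not representable. -/
noncomputable def flen {n : ℕ} (S : Set (List (Fin n))) (w : List (Fin n)) : ℕ∞ :=
  sInf {k : ℕ∞ | ∃ L : List (List (Fin n)),
    (∀ x ∈ L, x ∈ S) ∧ L.flatten = w ∧ (L.length : ℕ∞) = k}

/-- The expansion function `f_{G'}(s) = sup { r ∈ ℕ : B_G(r) ⊆ B_{G'}(s) }` of the free
monoid, valued in `ℝ≥0∞` (so `⊤` means the inclusion holds for every radius). -/
noncomputable def fexpansion {n : ℕ} (S : Set (List (Fin n))) (s : ℕ) : ℝ≥0∞ :=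
  sSup {x : ℝ≥0∞ | ∃ r : ℕ, x = (r : ℝ≥0∞) ∧
    ∀ w : List (Fin n), w.length ≤ r → flen S w ≤ (s : ℕ∞)}

lemma flatten_ofFn_getD {α : Type*} (s : ℕ) : ∀ (L : List (List α)), L.length ≤ s →
    (List.ofFn (fun i : Fin s => L.getD i [])).flatten = L.flatten := by
  induction s with
  | zero =>
    intro L hL
    have : L = [] := List.length_eq_zero_iff.mp (Nat.le_zero.mp hL)
    subst this; simp
  | succ s ih =>
    intro L hL
    rw [List.ofFn_succ, List.flatten_cons]
    cases L with
    | nil => simpa using ih [] (Nat.zero_le s)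
    | cons a t =>
      simp only [List.getD_cons_zero, Fin.val_succ, List.getD_cons_succ]
      rw [ih t (Nat.le_of_succ_le_succ hL)]; rfl

set_option maxHeartbeats 2000000 in
lemma exists_hard_word (n : ℕ) (hn : 2 ≤ n) (c p : ℝ) (hc : 0 < c) (hp : 0 ≤ p)
    (M : Set (List (Fin n)))
    (hM : ∀ ℓ : ℕ, 2 ≤ ℓ → (({m ∈ M | m.length = ℓ}).ncard : ℝ) ≤ c * (ℓ : ℝ) ^ p)
    (d : ℕ) (hd : 3 ≤ d)
    (hineq : 4 * Real.exp 1 * ((n : ℝ) + c) * (d : ℝ) ^ (p + 1) < (n : ℝ) ^ d)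
    (s : ℕ) (hs : 1 ≤ s) :
    ∃ w : List (Fin n), w.length = d * s ∧ ¬ flen (letters n ∪ M) w ≤ (s : ℕ∞) := by
  classical
  by_contra hcon
  push_neg at hcon
  set S : Set (List (Fin n)) := letters n ∪ M with hS
  -- basic numeric facts
  have hd0 : 0 < d := by omega
  have hN1 : 1 ≤ d * s := Nat.one_le_iff_ne_zero.mpr (by positivity)
  have hdR : (3:ℝ) ≤ (d:ℝ) := by exact_mod_cast hd
  have hdpos : (0:ℝ) < d := by linarith
  have hnR : (2:ℝ) ≤ (n:ℝ) := by exact_mod_cast hn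
  -- extraction of descriptions
  have hdesc : ∀ w : List (Fin n), w.length = d * s →
      ∃ L : List (List (Fin n)), (∀ x ∈ L, x ∈ S ∧ x ≠ []) ∧ L.flatten = w ∧ L.length ≤ s := by
    intro w hw
    have h1 : flen S w ≤ (s : ℕ∞) := hcon w hw
    have h2 : ∃ L : List (List (Fin n)), (∀ x ∈ L, x ∈ S) ∧ L.flatten = w ∧ L.length ≤ s := by
      by_contra hno
      push_neg at hno
      have hge : ((s:ℕ∞) + 1) ≤ flen S w := by
        apply le_sInf
        rintro k ⟨L, hLS, hLf, rfl⟩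
        have h3 : s + 1 ≤ L.length := hno L hLS hLf
        exact_mod_cast h3
      have h4 := hge.trans h1
      have h5 : s + 1 ≤ s := by exact_mod_cast h4
      omega
    obtain ⟨L0, hL0S, hL0f, hL0len⟩ := h2
    refine ⟨L0.filter (fun x => !x.isEmpty), ?_, ?_, ?_⟩
    · intro y hy
      rw [List.mem_filter] at hy
      refine ⟨hL0S y hy.1, ?_⟩
      simpa using hy.2
    · rw [List.flatten_filter_not_isEmpty, hL0f]
    · exact (List.length_filter_le _ _).trans hL0len
  -- the finite set of admissible pieces
  set A : Set (List (Fin n)) := {a | a ∈ S ∧ 1 ≤ a.length ∧ a.length ≤ d * s} with hA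
  have hAfin : A.Finite := (List.finite_length_le (Fin n) (d*s)).subset (fun a ha => ha.2.2)
  set Af : Finset (List (Fin n)) := hAfin.toFinset with hAf
  have hmemAf : ∀ a, a ∈ Af ↔ (a ∈ S ∧ 1 ≤ a.length ∧ a.length ≤ d * s) := fun a =>
    Set.Finite.mem_toFinset _
  have hnilAf : ([] : List (Fin n)) ∉ Af := by
    intro h
    have := (hmemAf _).mp h
    simp at this
  -- real constants
  set β : ℝ := 1 - 1/(2*(d:ℝ)) with hβ
  set q : ℝ := Real.exp (p / d) with hq
  set x : ℝ := β / q with hx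
  have hqpos : 0 < q := Real.exp_pos _
  have hq1 : 1 ≤ q := Real.one_le_exp (by positivity)
  have hu : 1/(2*(d:ℝ)) ≤ 1/6 := by
    rw [div_le_div_iff₀ (by linarith) (by norm_num)]
    linarith
  have hu0 : 0 < 1/(2*(d:ℝ)) := by positivity
  have hβpos : 0 < β := by rw [hβ]; linarith
  have hβlt1 : β < 1 := by rw [hβ]; linarith
  have hx0 : 0 < x := div_pos hβpos hqpos
  have hx1 : x ≤ 1 := by
    rw [hx, div_le_one hqpos]
    linarith
  have hqx : q * x = β := by
    rw [hx]
    field_simp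
  -- E1 : per-length inequality
  have hE1 : ∀ ℓ : ℕ, 1 ≤ ℓ → ((ℓ:ℝ)) ^ p * x ^ ℓ ≤ (d:ℝ) ^ p * Real.exp (-p) * β ^ ℓ := by
    intro ℓ hℓ
    have h1 : (ℓ:ℝ) ≤ d * Real.exp ((ℓ:ℝ)/d - 1) := by
      have h0 := Real.add_one_le_exp ((ℓ:ℝ)/d - 1)
      have h2 : (ℓ:ℝ)/d ≤ Real.exp ((ℓ:ℝ)/d - 1) := by linarith
      calc (ℓ:ℝ) = d * ((ℓ:ℝ)/d) := by field_simp
        _ ≤ d * Real.exp ((ℓ:ℝ)/d - 1) := mul_le_mul_of_nonneg_left h2 hdpos.le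
    have h2 : (ℓ:ℝ) ^ p ≤ ((d:ℝ) * Real.exp ((ℓ:ℝ)/d - 1)) ^ p :=
      Real.rpow_le_rpow (Nat.cast_nonneg ℓ) h1 hp
    have h3 : ((d:ℝ) * Real.exp ((ℓ:ℝ)/d - 1)) ^ p
        = (d:ℝ) ^ p * (Real.exp (-p) * q ^ ℓ) := by
      rw [Real.mul_rpow hdpos.le (Real.exp_pos _).le, ← Real.exp_mul]
      congr 1
      have he : ((ℓ:ℝ)/d - 1) * p = (ℓ:ℝ) * (p/d) + (-p) := by
        field_simp
        ring
      rw [he, Real.exp_add, Real.exp_nat_mul]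
      rw [hq]
      ring
    calc (ℓ:ℝ)^p * x^ℓ ≤ ((d:ℝ) ^ p * (Real.exp (-p) * q ^ ℓ)) * x ^ ℓ := by
          rw [← h3]; exact mul_le_mul_of_nonneg_right h2 (by positivity)
      _ = (d:ℝ)^p * Real.exp (-p) * (q*x)^ℓ := by rw [mul_pow]; ring
      _ = (d:ℝ)^p * Real.exp (-p) * β^ℓ := by rw [hqx]
  -- geometric sum bound
  have hgeom : ∀ m : ℕ, ∑ ℓ ∈ Finset.range m, β ^ ℓ ≤ 2 * d := by
    intro m
    have hne : β ≠ 1 := ne_of_lt hβlt1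
    rw [geom_sum_eq hne]
    rw [div_le_iff_of_neg (by linarith : β - 1 < 0)]
    have h2 : (2*(d:ℝ))*(β-1) = -1 := by
      rw [hβ]
      field_simp
      ring
    have h3 : (0:ℝ) ≤ β^m := by positivity
    nlinarith
  -- lower bound on x^d
  have hqd : q ^ d = Real.exp p := by
    rw [hq, ← Real.exp_nat_mul]
    congr 1
    field_simp
  have hβd : Real.exp (-1) ≤ β ^ d := by
    have ht : Real.exp (-(1/(d:ℝ))) ≤ β := by
      have h1 : (1:ℝ) + 1/d ≤ Real.exp (1/(d:ℝ)) := by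
        have := Real.add_one_le_exp (1/(d:ℝ)); linarith
      have hpos : (0:ℝ) < 1 + 1/(d:ℝ) := by positivity
      rw [Real.exp_neg]
      have h3 : (Real.exp (1/(d:ℝ)))⁻¹ ≤ (1 + 1/(d:ℝ))⁻¹ :=
        inv_anti₀ hpos h1
      refine h3.trans ?_
      rw [← one_div, div_le_iff₀ hpos, hβ]
      have hd2 : (0:ℝ) < (d:ℝ)*(d:ℝ) := by positivity
      field_simp
      nlinarith
    have hstep : Real.exp (-(1/(d:ℝ))) ^ d = Real.exp (-1) := by
      rw [← Real.exp_nat_mul]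
      congr 1
      field_simp
    calc Real.exp (-1) = Real.exp (-(1/(d:ℝ))) ^ d := hstep.symm
      _ ≤ β ^ d := pow_le_pow_left₀ (Real.exp_nonneg _) ht d
  have hxd : Real.exp (-1) * Real.exp (-p) ≤ x ^ d := by
    have hxde : x^d = β^d / Real.exp p := by rw [hx, div_pow, hqd]
    rw [hxde, le_div_iff₀ (Real.exp_pos p)]
    calc Real.exp (-1) * Real.exp (-p) * Real.exp p
        = Real.exp (-1) := by rw [mul_assoc, ← Real.exp_add]; simp
      _ ≤ β^d := hβd
  -- d^p dominates e^p
  have hdp : Real.exp p ≤ (d:ℝ) ^ p := by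
    rw [← Real.exp_one_rpow]
    exact Real.rpow_le_rpow (Real.exp_pos 1).le
      (Real.exp_one_lt_d9.le.trans (le_trans (by norm_num) hdR)) hp
  have hdp1 : (d:ℝ) ^ (p+1) = (d:ℝ)^p * d := Real.rpow_add_one (ne_of_gt hdpos) p
  -- choose descriptions and build the encoding
  choose Lw hLmem hLflat hLlen using hdesc
  have hofl : ∀ g : Fin (d*s) → Fin n, (List.ofFn g).length = d * s := fun g =>
    List.length_ofFn (f := g)
  set Φ : (Fin (d*s) → Fin n) → (Fin s → List (Fin n)) :=
    fun g => fun i => (Lw (List.ofFn g) (hofl g)).getD i [] with hΦ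
  have hΦflat : ∀ g, (List.ofFn (Φ g)).flatten = List.ofFn g := by
    intro g
    exact (flatten_ofFn_getD s _ (hLlen _ _)).trans (hLflat _ _)
  have hΦinj : ∀ g₁ g₂ : Fin (d*s) → Fin n, Φ g₁ = Φ g₂ → g₁ = g₂ := by
    intro g₁ g₂ h
    have h2 := congrArg List.flatten (congrArg List.ofFn h)
    rw [hΦflat, hΦflat] at h2
    exact List.ofFn_injective h2
  have hΦmem : ∀ g, ∀ i : Fin s, Φ g i ∈ insert ([] : List (Fin n)) Af := by
    intro g i
    by_cases hi : (i:ℕ) < (Lw (List.ofFn g) (hofl g)).length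
    · have hΦi : Φ g i = (Lw (List.ofFn g) (hofl g))[(i:ℕ)] := List.getD_eq_getElem _ _ hi
      rw [hΦi]
      apply Finset.mem_insert_of_mem
      rw [hmemAf]
      have hm : (Lw (List.ofFn g) (hofl g))[(i:ℕ)] ∈ Lw (List.ofFn g) (hofl g) :=
        List.getElem_mem hi
      have h1 := hLmem _ (hofl g) _ hm
      refine ⟨h1.1, ?_, ?_⟩
      · have h2 : (Lw (List.ofFn g) (hofl g))[(i:ℕ)] ≠ [] := h1.2
        have h3 : (Lw (List.ofFn g) (hofl g))[(i:ℕ)].length ≠ 0 := by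
          simpa [List.length_eq_zero_iff] using h2
        omega
      · have hsum : (Lw (List.ofFn g) (hofl g))[(i:ℕ)].length
            ≤ ((Lw (List.ofFn g) (hofl g)).map List.length).sum :=
          List.single_le_sum (by simp) _ (List.mem_map_of_mem hm)
        have htot : ((Lw (List.ofFn g) (hofl g)).map List.length).sum = d * s := by
          rw [← List.length_flatten, hLflat _ (hofl g), hofl g]
        omega
    · have hΦi : Φ g i = [] := List.getD_eq_default _ _ (not_lt.mp hi)
      rw [hΦi]
      exact Finset.mem_insert_self _ _
  have hΦsum : ∀ g, ∑ i : Fin s, (Φ g i).length = d * s := by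
    intro g
    have h1 := congrArg List.length (hΦflat g)
    rw [List.length_flatten, List.map_ofFn, List.sum_ofFn, List.length_ofFn] at h1
    exact h1
  -- the counting inequality
  set K : ℝ := ∑ a ∈ insert ([] : List (Fin n)) Af, x ^ a.length with hK
  have hcount : ((n:ℝ))^(d*s) * x^(d*s) ≤ K ^ s := by
    rw [hK, Finset.sum_pow']
    calc ((n:ℝ))^(d*s) * x^(d*s)
        = ∑ _g : Fin (d*s) → Fin n, x^(d*s) := by
          rw [Finset.sum_const, Finset.card_univ]
          have hcard : Fintype.card (Fin (d*s) → Fin n) = n ^ (d*s) := by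
            simp [Fintype.card_fun]
          rw [hcard, nsmul_eq_mul]
          push_cast
          ring
      _ = ∑ g : Fin (d*s) → Fin n, ∏ i : Fin s, x ^ (Φ g i).length := by
          refine Finset.sum_congr rfl fun g _ => ?_
          rw [Finset.prod_pow_eq_pow_sum, hΦsum g]
      _ = ∑ h ∈ Finset.univ.image Φ, ∏ i : Fin s, x ^ (h i).length := by
          rw [Finset.sum_image (fun g₁ _ g₂ _ h => hΦinj g₁ g₂ h)]
      _ ≤ ∑ h ∈ Fintype.piFinset (fun _ : Fin s => insert ([] : List (Fin n)) Af),
            ∏ i : Fin s, x ^ (h i).length := by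
          apply Finset.sum_le_sum_of_subset_of_nonneg
          · intro h hh
            rw [Finset.mem_image] at hh
            obtain ⟨g, _, rfl⟩ := hh
            rw [Fintype.mem_piFinset]
            exact hΦmem g
          · intro h _ _
            positivity
  have hKeq : K = 1 + ∑ a ∈ Af, x ^ a.length := by
    rw [hK, Finset.sum_insert hnilAf]
    simp
  have hW : ∑ a ∈ Af, x ^ a.length ≤ (n:ℝ) * x + c * (d:ℝ)^p * Real.exp (-p) * (2*d) := by
    have hmap : ∀ a ∈ Af, a.length ∈ Finset.range (d*s+1) := by
      intro a ha
      rw [Finset.mem_range]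
      have := (hmemAf a).mp ha
      omega
    rw [← Finset.sum_fiberwise_of_maps_to hmap]
    have hbound : ∀ ℓ ∈ Finset.range (d*s+1),
        (∑ a ∈ Af.filter (fun a => a.length = ℓ), x ^ a.length)
          ≤ (if ℓ = 1 then (n:ℝ) * x else 0) + c * (d:ℝ)^p * Real.exp (-p) * β ^ ℓ := by
      intro ℓ _
      have hsum_eq : (∑ a ∈ Af.filter (fun a => a.length = ℓ), x ^ a.length)
          = ((Af.filter (fun a => a.length = ℓ)).card : ℝ) * x ^ ℓ := by
        rw [Finset.sum_congr rfl (fun a ha => by rw [(Finset.mem_filter.mp ha).2]),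
          Finset.sum_const, nsmul_eq_mul]
      rw [hsum_eq]
      rcases Nat.lt_or_ge ℓ 2 with hℓ | hℓ
      · interval_cases ℓ
        · have hem : Af.filter (fun a => a.length = 0) = ∅ := by
            rw [Finset.filter_eq_empty_iff]
            intro a ha h0
            have := (hmemAf a).mp ha
            omega
          rw [hem]
          simp
          positivity
        · have hsub : Af.filter (fun a => a.length = 1)
              ⊆ Finset.univ.image (fun i : Fin n => [i]) := by
            intro a ha
            obtain ⟨i, hi⟩ := List.length_eq_one_iff.mp (Finset.mem_filter.mp ha).2
            subst hi
            exact Finset.mem_image.mpr ⟨i, Finset.mem_univ i, rfl⟩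
          have hcard : (Af.filter (fun a => a.length = 1)).card ≤ n := by
            refine (Finset.card_le_card hsub).trans ?_
            refine Finset.card_image_le.trans ?_
            simp
          have hcR : ((Af.filter (fun a => a.length = 1)).card : ℝ) ≤ n := by
            exact_mod_cast hcard
          have h2 : ((Af.filter (fun a => a.length = 1)).card : ℝ) * x ^ 1 ≤ (n:ℝ) * x := by
            rw [pow_one]
            exact mul_le_mul_of_nonneg_right hcR hx0.le
          have h3 : 0 ≤ c * (d:ℝ)^p * Real.exp (-p) * β^1 := by positivity
          rw [if_pos rfl]
          linarith
      · have hcard : ((Af.filter (fun a => a.length = ℓ)).card : ℝ) ≤ c * (ℓ:ℝ)^p := by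
          have hsub : (↑(Af.filter (fun a => a.length = ℓ)) : Set (List (Fin n)))
              ⊆ {m ∈ M | m.length = ℓ} := by
            intro a ha
            simp only [Finset.coe_filter, Set.mem_setOf_eq] at ha
            obtain ⟨haf, halen⟩ := ha
            have hA' := (hmemAf a).mp haf
            rcases hA'.1 with hl | hm
            · obtain ⟨i, rfl⟩ := hl
              simp at halen
              omega
            · exact ⟨hm, halen⟩
          have hfin2 : ({m ∈ M | m.length = ℓ} : Set (List (Fin n))).Finite :=
            (List.finite_length_eq (Fin n) ℓ).subset (fun a ha => ha.2)
          have hle := Set.ncard_le_ncard hsub hfin2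
          rw [Set.ncard_coe_finset] at hle
          calc ((Af.filter (fun a => a.length = ℓ)).card : ℝ)
              ≤ (({m ∈ M | m.length = ℓ} : Set (List (Fin n))).ncard : ℝ) := by
                exact_mod_cast hle
            _ ≤ c * (ℓ:ℝ)^p := hM ℓ hℓ
        have hne1 : ℓ ≠ 1 := by omega
        rw [if_neg hne1, zero_add]
        calc ((Af.filter (fun a => a.length = ℓ)).card : ℝ) * x ^ ℓ
            ≤ (c * (ℓ:ℝ)^p) * x ^ ℓ := mul_le_mul_of_nonneg_right hcard (by positivity)
          _ = c * ((ℓ:ℝ)^p * x^ℓ) := by ring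
          _ ≤ c * ((d:ℝ)^p * Real.exp (-p) * β^ℓ) :=
              mul_le_mul_of_nonneg_left (hE1 ℓ (by omega)) hc.le
          _ = c * (d:ℝ)^p * Real.exp (-p) * β^ℓ := by ring
    calc (∑ ℓ ∈ Finset.range (d*s+1), ∑ a ∈ Af.filter (fun a => a.length = ℓ), x ^ a.length)
        ≤ ∑ ℓ ∈ Finset.range (d*s+1),
            ((if ℓ = 1 then (n:ℝ)*x else 0) + c*(d:ℝ)^p*Real.exp (-p)*β^ℓ) :=
          Finset.sum_le_sum hbound
      _ = (n:ℝ)*x + c*(d:ℝ)^p*Real.exp (-p) * ∑ ℓ ∈ Finset.range (d*s+1), β^ℓ := by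
          rw [Finset.sum_add_distrib, Finset.sum_ite_eq' (Finset.range (d*s+1)) 1
            (fun _ => (n:ℝ)*x), if_pos (by rw [Finset.mem_range]; omega), ← Finset.mul_sum]
      _ ≤ (n:ℝ)*x + c*(d:ℝ)^p*Real.exp (-p) * (2*d) :=
          add_le_add_right (mul_le_mul_of_nonneg_left (hgeom _) (by positivity)) _
  -- final numeric bound on K
  have hKbound : K ≤ (2 * Real.exp 1 * ((n:ℝ)+c) * (d:ℝ)^(p+1)) * x ^ d := by
    have h1 : (1:ℝ) ≤ (d:ℝ)^p * Real.exp (-p) := by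
      rw [Real.exp_neg, ← div_eq_mul_inv, le_div_iff₀ (Real.exp_pos p), one_mul]
      exact hdp
    have h2 : 1 + (n:ℝ)*x ≤ 2*(n:ℝ) * ((d:ℝ)^(p+1) * Real.exp (-p)) := by
      have ha : (d:ℝ)^(p+1) * Real.exp (-p) = ((d:ℝ)^p * Real.exp (-p)) * d := by
        rw [hdp1]; ring
      have hb : (3:ℝ) ≤ ((d:ℝ)^p * Real.exp (-p)) * d := by nlinarith
      have hx' : (n:ℝ)*x ≤ n := by nlinarith
      nlinarith
    have h4 : c*(d:ℝ)^p*Real.exp (-p)*(2*d) = 2*c*((d:ℝ)^(p+1)*Real.exp (-p)) := by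
      rw [hdp1]; ring
    have h3 : K ≤ 2*((n:ℝ)+c)*((d:ℝ)^(p+1)*Real.exp (-p)) := by
      rw [hKeq]
      have hW' := hW
      rw [h4] at hW'
      nlinarith
    have h5 : Real.exp (-p) = Real.exp 1 * (Real.exp (-1) * Real.exp (-p)) := by
      rw [← mul_assoc, ← Real.exp_add]
      norm_num
    calc K ≤ 2*((n:ℝ)+c)*((d:ℝ)^(p+1)*Real.exp (-p)) := h3
      _ = (2 * Real.exp 1 * ((n:ℝ)+c) * (d:ℝ)^(p+1)) * (Real.exp (-1) * Real.exp (-p)) := by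
          have he : Real.exp 1 * Real.exp (-1) = 1 := by
            rw [← Real.exp_add]; norm_num
          linear_combination (-(2*((n:ℝ)+c)*(d:ℝ)^(p+1)*Real.exp (-p))) * he
      _ ≤ (2 * Real.exp 1 * ((n:ℝ)+c) * (d:ℝ)^(p+1)) * x ^ d := by
          apply mul_le_mul_of_nonneg_left hxd
          positivity
  have hK0 : 0 ≤ K := by
    rw [hK]
    apply Finset.sum_nonneg
    intro a _
    positivity
  -- contradiction
  have hfin1 : ((n:ℝ))^(d*s) * x^(d*s) ≤ ((2*Real.exp 1*((n:ℝ)+c)*(d:ℝ)^(p+1)))^s * x^(d*s) := by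
    calc ((n:ℝ))^(d*s) * x^(d*s) ≤ K ^ s := hcount
      _ ≤ ((2*Real.exp 1*((n:ℝ)+c)*(d:ℝ)^(p+1)) * x^d)^s := pow_le_pow_left₀ hK0 hKbound s
      _ = ((2*Real.exp 1*((n:ℝ)+c)*(d:ℝ)^(p+1)))^s * x^(d*s) := by
          rw [mul_pow, ← pow_mul]
  have hbase : (2*Real.exp 1*((n:ℝ)+c)*(d:ℝ)^(p+1)) < (n:ℝ)^d := by
    have hpos : 0 < Real.exp 1 * ((n:ℝ)+c) * (d:ℝ)^(p+1) := by positivity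
    nlinarith
  have hfin2 : ((2*Real.exp 1*((n:ℝ)+c)*(d:ℝ)^(p+1)))^s < ((n:ℝ)^d)^s :=
    pow_lt_pow_left₀ hbase (by positivity) (by omega)
  have hxpow : 0 < x^(d*s) := by positivity
  have hcontr : ((n:ℝ))^(d*s) * x^(d*s) < ((n:ℝ))^(d*s) * x^(d*s) := by
    calc ((n:ℝ))^(d*s) * x^(d*s) ≤ ((2*Real.exp 1*((n:ℝ)+c)*(d:ℝ)^(p+1)))^s * x^(d*s) := hfin1
      _ < ((n:ℝ)^d)^s * x^(d*s) := mul_lt_mul_of_pos_right hfin2 hxpow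
      _ = ((n:ℝ))^(d*s) * x^(d*s) := by rw [← pow_mul]
  exact lt_irrefl _ hcontr

/-- **Polynomial density gives linear expansion in the free monoid.**
Let `n ≥ 2` and let `M ⊆ F_n` contain at most `c·ℓ^p` macros of each `G`-length `ℓ ≥ 2`
(constants `c > 0`, `p ≥ 0`). Then for any integer `d ≥ 3` with
`n^d > 4e(n + c)d^{p+1}`, we have `f_{G'}(s) < d·s` for all `s ≥ 1`; in particular
`f_{G'}(s) = O(s)`. -/
theorem free_polynomial_density_linear_expansion
    (n : ℕ) (hn : 2 ≤ n) (c p : ℝ) (hc : 0 < c) (hp : 0 ≤ p)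
    (M : Set (List (Fin n)))
    (hM : ∀ ℓ : ℕ, 2 ≤ ℓ → (({m ∈ M | m.length = ℓ}).ncard : ℝ) ≤ c * (ℓ : ℝ) ^ p)
    (d : ℕ) (hd : 3 ≤ d)
    (hineq : 4 * Real.exp 1 * ((n : ℝ) + c) * (d : ℝ) ^ (p + 1) < (n : ℝ) ^ d) :
    (∀ s : ℕ, 1 ≤ s → fexpansion (letters n ∪ M) s < ((d * s : ℕ) : ℝ≥0∞)) ∧
    (∃ C : ℝ, 0 < C ∧ ∀ s : ℕ, 1 ≤ s →
      fexpansion (letters n ∪ M) s ≤ ENNReal.ofReal (C * s)) := by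
  have main : ∀ s : ℕ, 1 ≤ s → fexpansion (letters n ∪ M) s < ((d * s : ℕ) : ℝ≥0∞) := by
    intro s hs
    obtain ⟨w₀, hw₀len, hw₀⟩ := exists_hard_word n hn c p hc hp M hM d hd hineq s hs
    have hN1 : 1 ≤ d * s := by
      have : 1 * 1 ≤ d * s := Nat.mul_le_mul (by omega) hs
      omega
    apply lt_of_le_of_lt (b := ((d*s - 1 : ℕ) : ℝ≥0∞))
    · apply sSup_le
      rintro y ⟨r, rfl, hr⟩
      have hrlt : r < d * s := by
        by_contra hge
        push_neg at hge
        exact hw₀ (hr w₀ (by omega))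
      exact_mod_cast Nat.le_sub_one_of_lt hrlt
    · exact_mod_cast Nat.sub_lt (by omega) one_pos
  refine ⟨main, ⟨(d:ℝ), by exact_mod_cast (by omega : 0 < d), ?_⟩⟩
  intro s hs
  calc fexpansion (letters n ∪ M) s ≤ ((d*s : ℕ) : ℝ≥0∞) := (main s hs).le
    _ = ENNReal.ofReal ((d:ℝ) * s) := by
        rw [← ENNReal.ofReal_natCast]
        congr 1
        push_cast
        ring
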